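/- Let A, B, C, τ₁, τ₂ be real numbers and let ω > 0 satisfy (iω)² + A(iω) + B(iω)e^{−iωτ₁} + C e^{−iωτ₂} = 0. Then ω⁴ + (A² − B²)ω² + C² − 2Cω²·cos(ωτ₂) − 2ACω·sin(ωτ₂) = 0. -/

import Mathlib

/-- Eliminating τ₁ from a purely imaginary root of the two-delay characteristic
equation yields equation (2.7). -/
theorem stmt_14 (A B C τ₁ τ₂ ω : ℝ) (hω : 0 < ω)
    (heq : (Complex.I * (ω : ℂ)) ^ 2 + (A : ℂ) * (Complex.I * (ω : ℂ)) +
        (B : ℂ) * (Complex.I * (ω : ℂ)) * Complex.exp (-(Complex.I * (ω : ℂ)) * (τ₁ : ℂ)) +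
        (C : ℂ) * Complex.exp (-(Complex.I * (ω : ℂ)) * (τ₂ : ℂ)) = 0) :
    ω ^ 4 + (A ^ 2 - B ^ 2) * ω ^ 2 + C ^ 2 - 2 * C * ω ^ 2 * Real.cos (ω * τ₂) -
      2 * A * C * ω * Real.sin (ω * τ₂) = 0 := by
  have h1 : ∀ t : ℝ, -(Complex.I * (ω : ℂ)) * (t : ℂ) = ((-(ω*t) : ℝ) : ℂ) * Complex.I := by
    intro t; push_cast; ring
  rw [h1 τ₁, h1 τ₂, Complex.exp_mul_I, Complex.exp_mul_I, ← Complex.ofReal_cos,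
    ← Complex.ofReal_sin, ← Complex.ofReal_cos, ← Complex.ofReal_sin] at heq
  rw [Complex.ext_iff] at heq
  obtain ⟨hre, him⟩ := heq
  simp [Complex.add_re, Complex.add_im, Complex.mul_re, Complex.mul_im, pow_two, ← Complex.ofReal_mul, Complex.cos_ofReal_re, Complex.cos_ofReal_im, Complex.sin_ofReal_re, Complex.sin_ofReal_im] at hre him
  have e1 : B*ω*Real.sin (ω*τ₁) = ω*ω - C*Real.cos (ω*τ₂) := by linarith
  have e2 : B*ω*Real.cos (ω*τ₁) = C*Real.sin (ω*τ₂) - A*ω := by linarith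
  have s1 := congrArg (fun x => x^2) e1
  have s2 := congrArg (fun x => x^2) e2
  linear_combination -s1 - s2 + (B*ω)^2 * Real.sin_sq_add_cos_sq (ω*τ₁) - C^2 * Real.sin_sq_add_cos_sq (ω*τ₂)
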